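/- Let l, k be positive integers and α a positive real number such that α^(l+k) − α^l is an integer in [1, 2^(l/k)). Then neither α^l nor α^k is rational. -/
import Mathlib

lemma core6 (l k : ℕ) (hl : 1 ≤ l) (hk : 1 ≤ k) (α : ℝ) (hα : 0 < α)
    (M : ℤ)
    (h1 : α ^ l * (α ^ k - 1) = (M : ℝ))
    (hM1 : 1 ≤ (M : ℝ)) (hM2 : (M : ℝ) < (2 : ℝ) ^ ((l : ℝ) / (k : ℝ)))
    (p q : ℚ) (hp : α ^ l = (p : ℝ)) (hq : α ^ k = (q : ℝ)) : False := by
  have hl0 : 0 < α ^ l := pow_pos hα l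
  have hk1 : 1 < α ^ k := by nlinarith
  have hp0 : (0 : ℚ) < p := by
    have : (0:ℝ) < (p:ℝ) := hp ▸ hl0
    exact_mod_cast this
  have hq1 : (1 : ℚ) < q := by
    have : (1:ℝ) < (q:ℝ) := hq ▸ hk1
    exact_mod_cast this
  have hpq : p ^ k = q ^ l := by
    have : ((p ^ k : ℚ) : ℝ) = ((q ^ l : ℚ) : ℝ) := by
      push_cast
      rw [← hp, ← hq, ← pow_mul, ← pow_mul, Nat.mul_comm]
    exact_mod_cast this
  have hmul : p * (q - 1) = (M : ℚ) := by
    have : ((p * (q - 1) : ℚ) : ℝ) = ((M : ℚ) : ℝ) := by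
      push_cast
      rw [← hp, ← hq]; linarith
    exact_mod_cast this
  set a : ℤ := q.num with ha
  set b : ℤ := (q.den : ℤ) with hb
  set c : ℤ := p.num with hc
  set d : ℤ := (p.den : ℤ) with hd
  have hb0 : 0 < b := by rw [hb]; exact_mod_cast q.pos
  have hd0 : 0 < d := by rw [hd]; exact_mod_cast p.pos
  have ha0 : 0 < c := Rat.num_pos.mpr hp0
  have e1 : c ^ k = a ^ l := by
    have := congrArg Rat.num hpq
    rwa [Rat.num_pow, Rat.num_pow] at this
  have e2 : d ^ k = b ^ l := by
    have := congrArg Rat.den hpq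
    rw [Rat.den_pow, Rat.den_pow] at this
    rw [hd, hb]
    exact_mod_cast this
  have hab : b < a := by
    have h := hq1
    rw [← Rat.num_div_den q] at h
    have hbq : (0:ℚ) < (q.den : ℚ) := by exact_mod_cast q.pos
    rw [lt_div_iff₀ hbq, one_mul] at h
    rw [ha, hb]
    exact_mod_cast h
  have e3 : c * (a - b) = M * d * b := by
    have hQ : ((c * (a - b) : ℤ) : ℚ) = ((M * d * b : ℤ) : ℚ) := by
      rw [ha, hb, hc, hd]
      push_cast
      rw [← Rat.num_div_den p, ← Rat.num_div_den q] at hmul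
      have hbne : ((q.den : ℚ)) ≠ 0 := by positivity
      have hdne : ((p.den : ℚ)) ≠ 0 := by positivity
      field_simp at hmul
      linarith
    exact_mod_cast hQ
  have cop1 : IsCoprime a b := by
    rw [ha, hb, Int.isCoprime_iff_gcd_eq_one]
    simpa [Int.gcd] using q.reduced
  have cop2 : IsCoprime c d := by
    rw [hc, hd, Int.isCoprime_iff_gcd_eq_one]
    simpa [Int.gcd] using p.reduced
  have cop3 : IsCoprime b c := by
    have h' : IsCoprime (d ^ k) c := cop2.symm.pow_left
    rw [e2] at h'
    exact (IsCoprime.pow_left_iff hl).mp h'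
  have cop4 : IsCoprime b (a - b) := by
    have h' : IsCoprime b (a + b * (-1)) := cop1.symm.add_mul_left_right (-1)
    simpa [sub_eq_add_neg] using h'
  have hbdvd : b ∣ c * (a - b) := by
    rw [e3]; exact ⟨M * d, by ring⟩
  have hbu : IsUnit b := (cop3.mul_right cop4).isUnit_of_dvd' dvd_rfl hbdvd
  have hb1 : b = 1 := by
    rcases Int.isUnit_iff.mp hbu with h | h
    · exact h
    · omega
  have hden1 : q.den = 1 := by rw [hb] at hb1; exact_mod_cast hb1
  have hq_int : (q : ℝ) = (a : ℝ) := by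
    rw [ha]
    exact_mod_cast congrArg (Rat.cast (K:=ℝ)) ((Rat.den_eq_one_iff q).mp hden1).symm
  have ha2 : 2 ≤ a := by omega
  have hαk2 : (2:ℝ) ≤ α ^ k := by
    rw [hq, hq_int]
    exact_mod_cast ha2
  have hk0R : (0:ℝ) < (k:ℝ) := by positivity
  have hxk : ((2:ℝ) ^ ((l:ℝ)/(k:ℝ))) ^ k = 2 ^ l := by
    rw [← Real.rpow_natCast ((2:ℝ) ^ ((l:ℝ)/(k:ℝ))) k, ← Real.rpow_mul (by norm_num),
      div_mul_cancel₀ _ (ne_of_gt hk0R)]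
    exact Real.rpow_natCast 2 l
  have halk : (2:ℝ) ^ l ≤ (α ^ l) ^ k := by
    rw [← pow_mul, mul_comm l k, pow_mul]
    exact pow_le_pow_left₀ (by norm_num) hαk2 l
  have hge : (2:ℝ) ^ ((l:ℝ)/(k:ℝ)) ≤ α ^ l := by
    apply le_of_pow_le_pow_left₀ (by omega : k ≠ 0) (le_of_lt hl0)
    rw [hxk]; exact halk
  have : (2:ℝ) ^ ((l:ℝ)/(k:ℝ)) ≤ (M:ℝ) := by nlinarith
  linarith

theorem stmt_6 (l k : ℕ) (hl : 1 ≤ l) (hk : 1 ≤ k) (α : ℝ) (hα : 0 < α)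
    (M : ℤ) (hM : α ^ (l + k) - α ^ l = (M : ℝ))
    (hM1 : 1 ≤ (M : ℝ)) (hM2 : (M : ℝ) < (2 : ℝ) ^ ((l : ℝ) / (k : ℝ))) :
    Irrational (α ^ l) ∧ Irrational (α ^ k) := by
  have hl0 : 0 < α ^ l := pow_pos hα l
  have h1 : α ^ l * (α ^ k - 1) = (M : ℝ) := by
    rw [pow_add] at hM; linarith [hM]
  have hk1 : 1 < α ^ k := by nlinarith
  constructor
  · rintro ⟨p, hp⟩
    have hpne : (p:ℝ) ≠ 0 := by rw [hp]; positivity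
    refine core6 l k hl hk α hα M h1 hM1 hM2 p (1 + M / p) hp.symm ?_
    have hpm : (p:ℝ) * (α ^ k - 1) = M := by rw [hp]; exact h1
    push_cast
    field_simp
    linarith [hpm]
  · rintro ⟨q, hq⟩
    have hqne : (q:ℝ) - 1 ≠ 0 := by rw [hq]; linarith
    refine core6 l k hl hk α hα M h1 hM1 hM2 (M / (q - 1)) q ?_ hq.symm
    push_cast
    rw [eq_div_iff hqne, hq]
    exact h1
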